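/- Vector solution filtering theorem: let F₀ ⊆ F contain kρ², p, q, r ∈ ℕ, and define r_{p×q}(K) = { K₂ ⊗ j₂ + K₃ ⊗ j₃ : K₂, K₃ ∈ K^{p×q} } and m_{p×q}(K) = r_{p×q}(K) ⊕ { K₇ ⊗ j₇ : K₇ ∈ K^{p×q} }, with j₂ = (0,0,1)ᵀ, j₃ = (i·kx,i·ky,0)ᵀ, j₇ = (i·ky,−i·kx,0)ᵀ. If Ā ∈ R_{p×r}(F₀), X̄ ∈ m_{r×q}(F), and B̄ ∈ r_{p×q}(F₀) satisfy Ā·X̄ = B̄, then there exists X̄₀ ∈ r_{r×q}(F₀) with Ā·X̄₀ = B̄. -/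

import Mathlib

open Matrix Kronecker MvPolynomial

noncomputable section

set_option synthInstance.maxHeartbeats 1000000
set_option maxHeartbeats 1000000

/-- The nine matrices of the matrix basis; index `j : Fin 9` is `J_{j+1}`. -/
def Jm {R : Type*} [CommRing R] (kx ky i : R) : Fin 9 → Matrix (Fin 3) (Fin 3) R :=
  ![!![1,0,0; 0,1,0; 0,0,0],
    !![0,0,0; 0,0,0; 0,0,1],
    !![0,0,i*kx; 0,0,i*ky; 0,0,0],
    !![0,0,0; 0,0,0; i*kx,i*ky,0],
    !![-kx^2,-(kx*ky),0; -(kx*ky),-ky^2,0; 0,0,0],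
    !![0,0,0; 0,0,0; -(i*ky),i*kx,0],
    !![0,0,i*ky; 0,0,-(i*kx); 0,0,0],
    !![kx*ky,ky^2,0; -kx^2,-(kx*ky),0; 0,0,0],
    !![0,1,0; -1,0,0; 0,0,0]]

/-- The field `F = ℂ(kx, ky)` of rational functions in two indeterminates. -/
abbrev Fld : Type := FractionRing (MvPolynomial (Fin 2) ℂ)

def kxF : Fld := algebraMap (MvPolynomial (Fin 2) ℂ) Fld (X 0)
def kyF : Fld := algebraMap (MvPolynomial (Fin 2) ℂ) Fld (X 1)
def iF : Fld := algebraMap (MvPolynomial (Fin 2) ℂ) Fld (C Complex.I)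

/-- The column vectors `j₂ = (0,0,1)ᵀ`, `j₃ = (i kx, i ky, 0)ᵀ`,
`j₇ = (i ky, −i kx, 0)ᵀ` as `3 × 1` matrices. -/
def j2m : Matrix (Fin 3) (Fin 1) Fld := !![0; 0; 1]
def j3m : Matrix (Fin 3) (Fin 1) Fld := !![iF*kxF; iF*kyF; 0]
def j7m : Matrix (Fin 3) (Fin 1) Fld := !![iF*kyF; -(iF*kxF); 0]

/-- `R_{p×r}(K)`: block matrices `Σ_{j=1}^{5} A_j ⊗ J_j` with entries in `K`. -/
def inBlockR (K : Subfield Fld) {p q : ℕ}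
    (M : Matrix (Fin p × Fin 3) (Fin q × Fin 3) Fld) : Prop :=
  ∃ Ks : Fin 5 → Matrix (Fin p) (Fin q) Fld,
    (∀ j u v, Ks j u v ∈ K) ∧
    M = ∑ j : Fin 5, (Ks j) ⊗ₖ Jm kxF kyF iF (Fin.castLE (by norm_num) j)

/-- `r_{p×q}(K)`: block column matrices `K₂ ⊗ j₂ + K₃ ⊗ j₃` with entries in `K`. -/
def inBlockRvec (K : Subfield Fld) {p q : ℕ}
    (M : Matrix (Fin p × Fin 3) (Fin q × Fin 1) Fld) : Prop :=
  ∃ K2 K3 : Matrix (Fin p) (Fin q) Fld,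
    (∀ u v, K2 u v ∈ K) ∧ (∀ u v, K3 u v ∈ K) ∧
    M = K2 ⊗ₖ j2m + K3 ⊗ₖ j3m

/-- `m_{p×q}(F)`: block column matrices `K₂ ⊗ j₂ + K₃ ⊗ j₃ + K₇ ⊗ j₇`
with coefficients in the whole field `F`. -/
def inBlockMvec {p q : ℕ}
    (M : Matrix (Fin p × Fin 3) (Fin q × Fin 1) Fld) : Prop :=
  ∃ K2 K3 K7 : Matrix (Fin p) (Fin q) Fld,
    M = K2 ⊗ₖ j2m + K3 ⊗ₖ j3m + K7 ⊗ₖ j7m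

/-! ### Auxiliary lemmas -/

lemma iF_sq : iF * iF = -1 := by
  rw [iF, ← _root_.map_mul, ← C_mul, Complex.I_mul_I]; simp

lemma inj' : Function.Injective (algebraMap (MvPolynomial (Fin 2) ℂ) Fld) :=
  IsFractionRing.injective _ _

lemma iF_ne : iF ≠ 0 := by
  rw [iF, ne_eq, ← (algebraMap (MvPolynomial (Fin 2) ℂ) Fld).map_zero, inj'.eq_iff]
  simp [C_eq_zero, Complex.I_ne_zero]

lemma s_ne : kxF ^ 2 + kyF ^ 2 ≠ 0 := by
  rw [kxF, kyF, ← map_pow, ← map_pow, ← _root_.map_add, ne_eq,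
    ← (algebraMap (MvPolynomial (Fin 2) ℂ) Fld).map_zero, inj'.eq_iff]
  intro h
  have := congrArg (eval fun j => if j = 0 then (1:ℂ) else 0) h
  simp at this

/-- An `F₀`-linear retraction of `Fld` onto `F₀`. -/
lemma exists_proj (K : Subfield Fld) :
    ∃ π : Fld →ₗ[K] Fld, (∀ x ∈ K, π x = x) ∧ (∀ x, π x ∈ K) := by
  set p : Submodule K Fld := Submodule.span K {1} with hp
  have hmem : ∀ x : Fld, x ∈ p ↔ x ∈ K := by
    intro x
    rw [hp, Submodule.mem_span_singleton]
    constructor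
    · rintro ⟨c, rfl⟩
      simpa [Subfield.smul_def] using c.2
    · intro hx; exact ⟨⟨x, hx⟩, by simp [Subfield.smul_def]⟩
  obtain ⟨q, hq⟩ := Submodule.exists_isCompl p
  refine ⟨p.subtype ∘ₗ p.linearProjOfIsCompl q hq, ?_, ?_⟩
  · intro x hx
    have : x ∈ p := (hmem x).2 hx
    exact congrArg Subtype.val (Submodule.linearProjOfIsCompl_apply_left hq ⟨x, this⟩)
  · intro x
    exact (hmem _).1 (p.linearProjOfIsCompl q hq x).2

local notation "J" n => Jm kxF kyF iF n

lemma J1j2 : (J 0) * j2m = 0 := by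
  ext a b; fin_cases a <;> fin_cases b <;> simp [Jm, j2m, Matrix.mul_apply, Fin.sum_univ_three]
lemma J1j3 : (J 0) * j3m = j3m := by
  ext a b; fin_cases a <;> fin_cases b <;> simp [Jm, j3m, Matrix.mul_apply, Fin.sum_univ_three]
lemma J1j7 : (J 0) * j7m = j7m := by
  ext a b; fin_cases a <;> fin_cases b <;> simp [Jm, j7m, Matrix.mul_apply, Fin.sum_univ_three]
lemma J2j2 : (J 1) * j2m = j2m := by
  ext a b; fin_cases a <;> fin_cases b <;> simp [Jm, j2m, Matrix.mul_apply, Fin.sum_univ_three]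
lemma J2j3 : (J 1) * j3m = 0 := by
  ext a b; fin_cases a <;> fin_cases b <;> simp [Jm, j3m, Matrix.mul_apply, Fin.sum_univ_three]
lemma J2j7 : (J 1) * j7m = 0 := by
  ext a b; fin_cases a <;> fin_cases b <;> simp [Jm, j7m, Matrix.mul_apply, Fin.sum_univ_three]
lemma J3j2 : (J 2) * j2m = j3m := by
  ext a b; fin_cases a <;> fin_cases b <;> simp [Jm, j2m, j3m, Matrix.mul_apply, Fin.sum_univ_three]
lemma J3j3 : (J 2) * j3m = 0 := by
  ext a b; fin_cases a <;> fin_cases b <;> simp [Jm, j3m, Matrix.mul_apply, Fin.sum_univ_three]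
lemma J3j7 : (J 2) * j7m = 0 := by
  ext a b; fin_cases a <;> fin_cases b <;> simp [Jm, j7m, Matrix.mul_apply, Fin.sum_univ_three]
lemma J4j2 : (J 3) * j2m = 0 := by
  ext a b; fin_cases a <;> fin_cases b <;> simp [Jm, j2m, Matrix.mul_apply, Fin.sum_univ_three]
lemma J4j3 : (J 3) * j3m = (-(kxF ^ 2 + kyF ^ 2)) • j2m := by
  ext a b; fin_cases a <;> fin_cases b <;>
    simp [Jm, j3m, j2m, Matrix.mul_apply, Fin.sum_univ_three] <;>
    linear_combination (kxF^2 + kyF^2) * iF_sq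
lemma J4j7 : (J 3) * j7m = 0 := by
  ext a b; fin_cases a <;> fin_cases b <;>
    simp [Jm, j7m, Matrix.mul_apply, Fin.sum_univ_three] <;> ring
lemma J5j2 : (J 4) * j2m = 0 := by
  ext a b; fin_cases a <;> fin_cases b <;> simp [Jm, j2m, Matrix.mul_apply, Fin.sum_univ_three]
lemma J5j3 : (J 4) * j3m = (-(kxF ^ 2 + kyF ^ 2)) • j3m := by
  ext a b; fin_cases a <;> fin_cases b <;>
    simp [Jm, j3m, Matrix.mul_apply, Fin.sum_univ_three] <;> ring
lemma J5j7 : (J 4) * j7m = 0 := by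
  ext a b; fin_cases a <;> fin_cases b <;>
    simp [Jm, j7m, Matrix.mul_apply, Fin.sum_univ_three] <;> ring

/-- Block expansion of the product `Ā · X̄`. -/
lemma AX_eq {p r q : ℕ} (Ks : Fin 5 → Matrix (Fin p) (Fin r) Fld)
    (X2 X3 X7 : Matrix (Fin r) (Fin q) Fld) :
    (∑ j : Fin 5, (Ks j) ⊗ₖ Jm kxF kyF iF (Fin.castLE (by norm_num) j)) *
      (X2 ⊗ₖ j2m + X3 ⊗ₖ j3m + X7 ⊗ₖ j7m)
    = (Ks 1 * X2 + (-(kxF ^ 2 + kyF ^ 2)) • (Ks 3 * X3)) ⊗ₖ j2m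
      + (Ks 2 * X2 + Ks 0 * X3 + (-(kxF ^ 2 + kyF ^ 2)) • (Ks 4 * X3)) ⊗ₖ j3m
      + (Ks 0 * X7) ⊗ₖ j7m := by
  have c1 : (Fin.castLE (by norm_num) (1:Fin 5) : Fin 9) = 1 := rfl
  have c2 : (Fin.castLE (by norm_num) (2:Fin 5) : Fin 9) = 2 := rfl
  have c3 : (Fin.castLE (by norm_num) (3:Fin 5) : Fin 9) = 3 := rfl
  have c4 : (Fin.castLE (by norm_num) (4:Fin 5) : Fin 9) = 4 := rfl
  have c0 : (Fin.castLE (by norm_num) (0:Fin 5) : Fin 9) = 0 := rfl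
  simp only [Fin.sum_univ_five, Matrix.add_mul, Matrix.mul_add, ← Matrix.mul_kronecker_mul,
    c0, c1, c2, c3, c4,
    J1j2, J1j3, J1j7, J2j2, J2j3, J2j7, J3j2, J3j3, J3j7, J4j2, J4j3, J4j7,
    J5j2, J5j3, J5j7, Matrix.kronecker_smul, Matrix.smul_kronecker,
    Matrix.add_kronecker, Matrix.kronecker_zero, Matrix.mul_zero, Matrix.zero_mul]
  abel

/-- Linear independence of `j₂, j₃, j₇` at the level of Kronecker blocks. -/
lemma indep0 {p q : ℕ} (C2 C3 C7 : Matrix (Fin p) (Fin q) Fld)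
    (h : C2 ⊗ₖ j2m + C3 ⊗ₖ j3m + C7 ⊗ₖ j7m = 0) :
    C2 = 0 ∧ C3 = 0 ∧ C7 = 0 := by
  have hine := iF_ne
  have hsne := s_ne
  have key : ∀ u v, C2 u v = 0 ∧ C3 u v = 0 ∧ C7 u v = 0 := by
    intro u v
    have h0 := congrFun (congrFun h (u, 0)) (v, 0)
    have h1 := congrFun (congrFun h (u, 1)) (v, 0)
    have h2 := congrFun (congrFun h (u, 2)) (v, 0)
    simp [Matrix.add_apply, Matrix.kroneckerMap_apply, j2m, j3m, j7m] at h0 h1 h2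
    have hmul : iF * (kxF ^ 2 + kyF ^ 2) ≠ 0 := mul_ne_zero hine hsne
    have hC3 : C3 u v * (iF * (kxF ^ 2 + kyF ^ 2)) = 0 := by
      linear_combination kxF * h0 + kyF * h1
    have hC7 : C7 u v * (iF * (kxF ^ 2 + kyF ^ 2)) = 0 := by
      linear_combination kyF * h0 - kxF * h1
    exact ⟨h2, (mul_eq_zero.mp hC3).resolve_right hmul,
      (mul_eq_zero.mp hC7).resolve_right hmul⟩
  refine ⟨?_, ?_, ?_⟩
  · ext u v; exact (key u v).1
  · ext u v; exact (key u v).2.1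
  · ext u v; exact (key u v).2.2

lemma sub_kronecker {l m n p : Type*} (A B : Matrix l m Fld) (C : Matrix n p Fld) :
    (A - B) ⊗ₖ C = A ⊗ₖ C - B ⊗ₖ C := by
  ext ⟨i, j⟩ ⟨k, l'⟩
  simp [Matrix.kroneckerMap_apply, Matrix.sub_apply, sub_mul]

lemma indep {p q : ℕ} (C2 C3 C7 D2 D3 D7 : Matrix (Fin p) (Fin q) Fld)
    (h : C2 ⊗ₖ j2m + C3 ⊗ₖ j3m + C7 ⊗ₖ j7m = D2 ⊗ₖ j2m + D3 ⊗ₖ j3m + D7 ⊗ₖ j7m) :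
    C2 = D2 ∧ C3 = D3 ∧ C7 = D7 := by
  have h' : (C2 - D2) ⊗ₖ j2m + (C3 - D3) ⊗ₖ j3m + (C7 - D7) ⊗ₖ j7m = 0 := by
    have h2 := sub_eq_zero_of_eq h
    simp only [sub_kronecker]
    rw [← h2]; abel
  obtain ⟨h2, h3, h7⟩ := indep0 _ _ _ h'
  exact ⟨sub_eq_zero.mp h2, sub_eq_zero.mp h3, sub_eq_zero.mp h7⟩

/-- Entrywise projection commutes with multiplication by a matrix over `K`. -/
lemma pMat_mul {K : Subfield Fld} (π : Fld →ₗ[K] Fld)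
    {p r q : ℕ} (M : Matrix (Fin p) (Fin r) Fld) (hM : ∀ u v, M u v ∈ K)
    (N : Matrix (Fin r) (Fin q) Fld) :
    Matrix.of (fun u v => π ((M * N) u v)) = M * Matrix.of (fun u v => π (N u v)) := by
  ext u v
  simp only [Matrix.of_apply, Matrix.mul_apply]
  rw [map_sum]
  refine Finset.sum_congr rfl fun k _ => ?_
  have : M u k * N k v = (⟨M u k, hM u k⟩ : K) • N k v := by simp [Subfield.smul_def]
  rw [this, π.map_smul, Subfield.smul_def, smul_eq_mul]

lemma pMat_smul {K : Subfield Fld} (π : Fld →ₗ[K] Fld) {m n : ℕ} (c : Fld) (hc : c ∈ K)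
    (N : Matrix (Fin m) (Fin n) Fld) :
    Matrix.of (fun u v => π ((c • N) u v)) = c • Matrix.of (fun u v => π (N u v)) := by
  ext u v
  simp only [Matrix.of_apply, Matrix.smul_apply, smul_eq_mul]
  have : c * N u v = (⟨c, hc⟩ : K) • N u v := by simp [Subfield.smul_def]
  rw [this, π.map_smul, Subfield.smul_def, smul_eq_mul]

/-- vector solution filtering: if `Ā ∈ R_{p×r}(F₀)`,
`X̄ ∈ m_{r×q}(F)`, `B̄ ∈ r_{p×q}(F₀)` and `Ā·X̄ = B̄`, then there exists
`X̄₀ ∈ r_{r×q}(F₀)` with `Ā·X̄₀ = B̄`. -/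
theorem vector_solution_filtering (F₀ : Subfield Fld)
    (hF₀ : kxF^2 + kyF^2 ∈ F₀) (p q r : ℕ)
    (A : Matrix (Fin p × Fin 3) (Fin r × Fin 3) Fld)
    (Xv : Matrix (Fin r × Fin 3) (Fin q × Fin 1) Fld)
    (B : Matrix (Fin p × Fin 3) (Fin q × Fin 1) Fld)
    (hA : inBlockR F₀ A) (hX : inBlockMvec Xv) (hB : inBlockRvec F₀ B)
    (hAXB : A * Xv = B) :
    ∃ X₀ : Matrix (Fin r × Fin 3) (Fin q × Fin 1) Fld,
      inBlockRvec F₀ X₀ ∧ A * X₀ = B := by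
  obtain ⟨Ks, hKs, hAeq⟩ := hA
  obtain ⟨X2, X3, X7, hXeq⟩ := hX
  obtain ⟨B2, B3, hB2, hB3, hBeq⟩ := hB
  -- block equations from A * Xv = B
  have hexp : (Ks 1 * X2 + (-(kxF ^ 2 + kyF ^ 2)) • (Ks 3 * X3)) ⊗ₖ j2m
      + (Ks 2 * X2 + Ks 0 * X3 + (-(kxF ^ 2 + kyF ^ 2)) • (Ks 4 * X3)) ⊗ₖ j3m
      + (Ks 0 * X7) ⊗ₖ j7m
      = B2 ⊗ₖ j2m + B3 ⊗ₖ j3m + (0 : Matrix (Fin p) (Fin q) Fld) ⊗ₖ j7m := by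
    rw [← AX_eq, ← hXeq, ← hAeq, hAXB, hBeq, Matrix.zero_kronecker, add_zero]
  obtain ⟨hE1, hE2, -⟩ := indep _ _ _ _ _ _ hexp
  -- project the coefficient matrices into F₀
  obtain ⟨π, hπfix, hπmem⟩ := exists_proj F₀
  set Y2 : Matrix (Fin r) (Fin q) Fld := Matrix.of (fun u v => π (X2 u v)) with hY2
  set Y3 : Matrix (Fin r) (Fin q) Fld := Matrix.of (fun u v => π (X3 u v)) with hY3
  have hsneg : -(kxF ^ 2 + kyF ^ 2) ∈ F₀ := neg_mem hF₀
  have hfixM : ∀ {m n : ℕ} (M : Matrix (Fin m) (Fin n) Fld), (∀ u v, M u v ∈ F₀) →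
      Matrix.of (fun u v => π (M u v)) = M := by
    intro m n M hMem
    ext u v
    exact hπfix _ (hMem u v)
  have hE1' : Ks 1 * Y2 + (-(kxF ^ 2 + kyF ^ 2)) • (Ks 3 * Y3) = B2 := by
    have : Matrix.of (fun u v => π ((Ks 1 * X2 + (-(kxF ^ 2 + kyF ^ 2)) • (Ks 3 * X3)) u v))
        = Ks 1 * Y2 + (-(kxF ^ 2 + kyF ^ 2)) • (Ks 3 * Y3) := by
      ext u v
      simp only [Matrix.of_apply, Matrix.add_apply, map_add]
      rw [← Matrix.of_apply (fun u v => π ((Ks 1 * X2) u v)) u v,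
        ← Matrix.of_apply (fun u v => π (((-(kxF ^ 2 + kyF ^ 2)) • (Ks 3 * X3)) u v)) u v,
        pMat_mul π (Ks 1) (hKs 1) X2, pMat_smul π _ hsneg, pMat_mul π (Ks 3) (hKs 3) X3]
    rw [hE1] at this
    rw [← this, hfixM B2 hB2]
  have hE2' : Ks 2 * Y2 + Ks 0 * Y3 + (-(kxF ^ 2 + kyF ^ 2)) • (Ks 4 * Y3) = B3 := by
    have : Matrix.of (fun u v => π ((Ks 2 * X2 + Ks 0 * X3
          + (-(kxF ^ 2 + kyF ^ 2)) • (Ks 4 * X3)) u v))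
        = Ks 2 * Y2 + Ks 0 * Y3 + (-(kxF ^ 2 + kyF ^ 2)) • (Ks 4 * Y3) := by
      ext u v
      simp only [Matrix.of_apply, Matrix.add_apply, map_add]
      rw [← Matrix.of_apply (fun u v => π ((Ks 2 * X2) u v)) u v,
        ← Matrix.of_apply (fun u v => π ((Ks 0 * X3) u v)) u v,
        ← Matrix.of_apply (fun u v => π (((-(kxF ^ 2 + kyF ^ 2)) • (Ks 4 * X3)) u v)) u v,
        pMat_mul π (Ks 2) (hKs 2) X2, pMat_mul π (Ks 0) (hKs 0) X3,
        pMat_smul π _ hsneg, pMat_mul π (Ks 4) (hKs 4) X3]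
    rw [hE2] at this
    rw [← this, hfixM B3 hB3]
  refine ⟨Y2 ⊗ₖ j2m + Y3 ⊗ₖ j3m, ⟨Y2, Y3, fun u v => hπmem _, fun u v => hπmem _, rfl⟩, ?_⟩
  have : Y2 ⊗ₖ j2m + Y3 ⊗ₖ j3m
      = Y2 ⊗ₖ j2m + Y3 ⊗ₖ j3m + (0 : Matrix (Fin r) (Fin q) Fld) ⊗ₖ j7m := by
    rw [Matrix.zero_kronecker, add_zero]
  rw [this, hAeq, AX_eq, hE1', hE2', Matrix.mul_zero, Matrix.zero_kronecker, add_zero, hBeq]
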